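/- Let (a_n)_{n∈ℕ} and (b_n)_{n∈ℕ} be bounded sequences of nonzero complex numbers, let A and B be the diagonal operators on K = ℓ²(ℕ) with diagonals (a_n)_n and (b_n)_n respectively, and put H = K ⊕ K. Then: (i) if ran A is closed and ran B is not closed, then the systems (H; K ⊕ 0, graph(A)) and (H; K ⊕ 0, graph(B)) are not algebraically isomorphic; (ii) if ran A and ran B are both closed or both non-closed, then the systems (H; K ⊕ 0, graph(A)) and (H; K ⊕ 0, graph(B)) are algebraically isomorphic. -/

import Mathlib

/- STATEMENT 8: Let A, B be the diagonal operators on K = ℓ²(ℕ) with bounded nonzero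
diagonals (aₙ), (bₙ) and H = K ⊕ K. (i) If ran A is closed and ran B is not, then
(H; K ⊕ 0, graph A) and (H; K ⊕ 0, graph B) are not algebraically isomorphic.
(ii) If ran A and ran B are both closed or both non-closed, then they are
algebraically isomorphic. -/

noncomputable section

abbrev K : Type := lp (fun _ : ℕ => ℂ) 2

/-- The graph of the diagonal operator with diagonals `a`, as a subspace of `K × K`. -/
def diagGraph (a : ℕ → ℂ) : Submodule ℂ (K × K) where
  carrier := {p | ∀ n, p.2 n = a n * p.1 n}
  add_mem' := by
    intro p q hp hq n
    simp only [Prod.snd_add, Prod.fst_add, lp.coeFn_add, Pi.add_apply, hp n, hq n]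
    ring
  zero_mem' := by
    intro n
    simp [lp.coeFn_zero]
  smul_mem' := by
    intro c p hp n
    simp only [Prod.smul_snd, Prod.smul_fst, lp.coeFn_smul, Pi.smul_apply, hp n, smul_eq_mul]
    ring

/-- The range of the diagonal operator with diagonals `a`, as a subspace of `K`. -/
def diagRange (a : ℕ → ℂ) : Submodule ℂ K where
  carrier := {y | ∃ x : K, ∀ n, y n = a n * x n}
  add_mem' := by
    rintro y z ⟨x, hx⟩ ⟨w, hw⟩
    refine ⟨x + w, fun n => ?_⟩
    simp only [lp.coeFn_add, Pi.add_apply, hx n, hw n]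
    ring
  zero_mem' := ⟨0, fun n => by simp [lp.coeFn_zero]⟩
  smul_mem' := by
    rintro c y ⟨x, hx⟩
    refine ⟨c • x, fun n => ?_⟩
    simp only [lp.coeFn_smul, Pi.smul_apply, hx n, smul_eq_mul]
    ring

/-- The subspace K ⊕ 0 of K ⊕ K. -/
def firstSummand : Submodule ℂ (K × K) := (⊤ : Submodule ℂ K).prod (⊥ : Submodule ℂ K)

-- ==================== auxiliary lemmas ====================

namespace Stmt8

open scoped ENNReal

lemma mem_diagGraph {a : ℕ → ℂ} {p : K × K} :
    p ∈ diagGraph a ↔ ∀ n, p.2 n = a n * p.1 n := Iff.rfl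

lemma mem_diagRange {a : ℕ → ℂ} {y : K} :
    y ∈ diagRange a ↔ ∃ x : K, ∀ n, y n = a n * x n := Iff.rfl

lemma mem_firstSummand {p : K × K} : p ∈ firstSummand ↔ p.2 = 0 := by
  simp [firstSummand, Submodule.mem_prod]

lemma toReal_two : ((2 : ℝ≥0∞)).toReal = (2 : ℝ) := by norm_num

lemma summable_norm_sq (g : K) : Summable (fun n => ‖g n‖ ^ (2 : ℝ)) := by
  have := (lp.memℓp g).summable (p := 2) (by norm_num)
  rwa [toReal_two] at this

/-- comparison criterion for membership in ℓ². -/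
lemma memℓp_two_of_le {f : ℕ → ℂ} {g : K} {C : ℝ} (hC : 0 ≤ C)
    (h : ∀ n, ‖f n‖ ≤ C * ‖g n‖) : Memℓp f 2 := by
  apply memℓp_gen (p := 2)
  rw [toReal_two]
  refine Summable.of_nonneg_of_le (fun n => ?_) (fun n => ?_)
    (((summable_norm_sq g).mul_left (C ^ (2 : ℝ))))
  · positivity
  · calc ‖f n‖ ^ (2:ℝ) ≤ (C * ‖g n‖) ^ (2:ℝ) :=
          Real.rpow_le_rpow (norm_nonneg _) (h n) (by norm_num)
      _ = C ^ (2:ℝ) * ‖g n‖ ^ (2:ℝ) :=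
          Real.mul_rpow hC (norm_nonneg _)

lemma K_ext {f g : K} (h : ∀ n, f n = g n) : f = g :=
  lp.ext (funext h)

def bigS (a : ℕ → ℂ) : Submodule ℂ (K × K) := (⊤ : Submodule ℂ K).prod (diagRange a)

lemma firstSummand_le_bigS (a : ℕ → ℂ) : firstSummand ≤ bigS a := by
  rintro ⟨u, v⟩ hp
  rw [mem_firstSummand] at hp
  subst hp
  exact ⟨trivial, Submodule.zero_mem _⟩

lemma diagGraph_le_bigS (a : ℕ → ℂ) : diagGraph a ≤ bigS a := by
  rintro ⟨u, v⟩ hp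
  exact ⟨trivial, ⟨u, hp⟩⟩

lemma inf_graph (a : ℕ → ℂ) (ha_ne : ∀ n, a n ≠ 0) :
    firstSummand ⊓ diagGraph a = ⊥ := by
  rw [eq_bot_iff]
  rintro ⟨u, v⟩ hp
  rw [Submodule.mem_inf] at hp
  obtain ⟨h1, h2⟩ := hp
  rw [mem_firstSummand] at h1
  have hu : u = 0 := by
    apply K_ext
    intro n
    have := h2 n
    rw [h1] at this
    simp only [lp.coeFn_zero, Pi.zero_apply] at this ⊢
    exact (mul_eq_zero.mp this.symm).resolve_left (ha_ne n)
  rw [Submodule.mem_bot]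
  exact Prod.ext_iff.mpr ⟨hu, h1⟩

lemma sup_graph (a : ℕ → ℂ) : firstSummand ⊔ diagGraph a = bigS a := by
  apply le_antisymm
  · exact sup_le (firstSummand_le_bigS a) (diagGraph_le_bigS a)
  · rintro ⟨u, v⟩ ⟨-, x, hx⟩
    have h1 : ((u - x, 0) : K × K) ∈ firstSummand := mem_firstSummand.mpr rfl
    have h2 : ((x, v) : K × K) ∈ diagGraph a := hx
    have := Submodule.add_mem _ (Submodule.mem_sup_left h1) (Submodule.mem_sup_right h2)
    simpa using this

lemma diagRange_eq_top_of_isClosed (a : ℕ → ℂ) (ha_ne : ∀ n, a n ≠ 0)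
    (h : IsClosed ((diagRange a) : Set K)) : diagRange a = ⊤ := by
  rw [eq_top_iff]
  intro f _
  haveI : Fact ((1:ℝ≥0∞) ≤ 2) := ⟨by norm_num⟩
  have hs : HasSum (fun i : ℕ => lp.single 2 i (f i)) f := lp.hasSum_single (by norm_num) f
  have hmem : ∀ s : Finset ℕ, (∑ i ∈ s, lp.single 2 i (f i)) ∈ (diagRange a : Set K) := by
    intro s
    refine ⟨∑ i ∈ s, lp.single 2 i (f i / a i), fun n => ?_⟩
    simp only [lp.coeFn_sum, Finset.sum_apply, lp.single_apply, Finset.sum_dite_eq, Pi.single_apply,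
      Finset.sum_ite_eq, Finset.sum_ite_eq']
    split_ifs with hn
    · rw [mul_comm, div_mul_cancel₀ _ (ha_ne n)]
    · simp
  exact h.mem_of_tendsto hs (Filter.Eventually.of_forall hmem)

lemma diagRange_eq_top_of_bddBelow (a : ℕ → ℂ) (ha_ne : ∀ n, a n ≠ 0) {δ : ℝ}
    (hδ : 0 < δ) (hb : ∀ n, δ ≤ ‖a n‖) : diagRange a = ⊤ := by
  rw [eq_top_iff]
  intro v _
  have hmem : Memℓp (fun n => v n / a n) 2 := by
    apply memℓp_two_of_le (C := δ⁻¹) (g := v) (by positivity)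
    intro n
    rw [norm_div, div_eq_mul_inv, mul_comm]
    apply mul_le_mul_of_nonneg_right _ (norm_nonneg _)
    exact inv_anti₀ hδ (hb n)
  refine ⟨⟨(fun n => v n / a n : ℕ → ℂ), hmem⟩, fun n => ?_⟩
  show v n = a n * (v n / a n)
  rw [mul_comm, div_mul_cancel₀ _ (ha_ne n)]

lemma exists_small (a : ℕ → ℂ) (ha_ne : ∀ n, a n ≠ 0)
    (h : ¬ IsClosed ((diagRange a) : Set K)) :
    ∀ N : ℕ, ∀ δ : ℝ, 0 < δ → ∃ m, N < m ∧ ‖a m‖ < δ := by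
  intro N δ hδ
  by_contra hc
  push_neg at hc
  set T : Finset ℕ := Finset.range (N + 1) with hT
  have hTne : T.Nonempty := ⟨0, Finset.mem_range.mpr (Nat.succ_pos N)⟩
  set δ' : ℝ := min δ (T.inf' hTne (fun j => ‖a j‖)) with hδ'
  have hδ'pos : 0 < δ' := by
    apply lt_min hδ
    rw [Finset.lt_inf'_iff]
    intro j _
    exact norm_pos_iff.mpr (ha_ne j)
  have hbdd : ∀ m, δ' ≤ ‖a m‖ := by
    intro m
    rcases le_or_gt m N with hm | hm
    · exact le_trans (min_le_right _ _)
        (Finset.inf'_le _ (Finset.mem_range.mpr (Nat.lt_succ_of_le hm)))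
    · exact le_trans (min_le_left _ _) (hc m hm)
  apply h
  rw [diagRange_eq_top_of_bddBelow a ha_ne hδ'pos hbdd, Submodule.top_coe]
  exact isClosed_univ

lemma exists_subseq (a : ℕ → ℂ)
    (key : ∀ N : ℕ, ∀ δ : ℝ, 0 < δ → ∃ m, N < m ∧ ‖a m‖ < δ) :
    ∃ n : ℕ → ℕ, StrictMono n ∧ ∀ k, ‖a (n k)‖ < (2⁻¹ : ℝ) ^ (k + 1) := by
  have key' : ∀ N k : ℕ, ∃ m, N < m ∧ ‖a m‖ < (2⁻¹ : ℝ) ^ (k + 1) :=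
    fun N k => key N _ (by positivity)
  choose F h1 h2 using key'
  refine ⟨fun k => Nat.rec (F 0 0) (fun k ih => F ih (k + 1)) k,
    strictMono_nat_of_lt_succ (fun k => h1 _ _), fun k => ?_⟩
  cases k with
  | zero => exact h2 0 0
  | succ k => exact h2 _ _

lemma rank_quot_upper (a : ℕ → ℂ) :
    Module.rank ℂ (K ⧸ diagRange a) ≤ Cardinal.continuum := by
  calc Module.rank ℂ (K ⧸ diagRange a) ≤ Module.rank ℂ K := rank_quotient_le _
    _ ≤ Cardinal.mk K := rank_le_card _ _
    _ ≤ Cardinal.mk (ℕ → ℂ) :=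
        Cardinal.mk_le_of_injective (f := fun f : K => (f : ℕ → ℂ))
          (fun f g hfg => lp.ext hfg)
    _ = Cardinal.continuum := by
        rw [Cardinal.mk_arrow]
        simp only [Cardinal.lift_id, Cardinal.mk_complex, Cardinal.mk_nat]
        exact Cardinal.continuum_power_aleph0

lemma rank_quot_continuum (a : ℕ → ℂ) (ha_ne : ∀ n, a n ≠ 0)
    (h : ¬ IsClosed ((diagRange a) : Set K)) :
    Module.rank ℂ (K ⧸ diagRange a) = Cardinal.continuum := by
  obtain ⟨nn, hmono, hεlt⟩ := exists_subseq a (exists_small a ha_ne h)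
  set ε : ℕ → ℝ := fun k => ‖a (nn k)‖ with hεdef
  have εpos : ∀ k, 0 < ε k := fun k => norm_pos_iff.mpr (ha_ne _)
  have εone : ∀ k, ε k ≤ 1 := by
    intro k
    refine le_trans (hεlt k).le (pow_le_one₀ (by norm_num) (by norm_num))
  have hε0 : Filter.Tendsto ε Filter.atTop (nhds 0) := by
    apply squeeze_zero (fun k => (εpos k).le) (fun k => (hεlt k).le)
    exact (tendsto_pow_atTop_nhds_zero_of_lt_one (by norm_num) (by norm_num)).comp
      (Filter.tendsto_add_atTop_nat 1)
  have hrpow : ∀ c : ℝ, 0 < c →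
      Filter.Tendsto (fun k => ε k ^ c) Filter.atTop (nhds 0) := by
    intro c hc
    have hcont : ContinuousAt (fun x : ℝ => x ^ c) 0 :=
      Real.continuousAt_rpow_const 0 c (Or.inr hc.le)
    have := hcont.tendsto.comp hε0
    rwa [Real.zero_rpow hc.ne'] at this
  -- the independent family
  set ι : Type := ↥(Set.Ioo (4⁻¹ : ℝ) 2⁻¹) with hι
  have htmem : ∀ t : ι, (4⁻¹ : ℝ) < (t : ℝ) ∧ (t : ℝ) < 2⁻¹ := fun t => ⟨t.2.1, t.2.2⟩
  set yf : ι → ℕ → ℂ :=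
    fun t => Set.indicator (Set.range nn) (fun m => ((‖a m‖ ^ (t : ℝ) : ℝ) : ℂ)) with hyf
  have hyf_at : ∀ (t : ι) (k : ℕ), yf t (nn k) = ((ε k ^ (t : ℝ) : ℝ) : ℂ) := by
    intro t k
    rw [hyf]
    simp only [Set.indicator_of_mem (Set.mem_range_self k)]
    rfl
  have hyf_off : ∀ (t : ι) (m : ℕ), m ∉ Set.range nn → yf t m = 0 := by
    intro t m hm
    rw [hyf]
    simp only [Set.indicator_of_notMem hm]
  have hyf_mem : ∀ t : ι, Memℓp (yf t) 2 := by
    intro t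
    apply memℓp_gen (p := 2)
    rw [toReal_two]
    have hvanish : ∀ m ∉ Set.range nn, ‖yf t m‖ ^ (2:ℝ) = 0 := by
      intro m hm
      rw [hyf_off t m hm, norm_zero, Real.zero_rpow (by norm_num)]
    rw [← Function.Injective.summable_iff hmono.injective hvanish]
    have hval : ∀ k, ((fun m => ‖yf t m‖ ^ (2:ℝ)) ∘ nn) k = ε k ^ ((t:ℝ) * 2) := by
      intro k
      simp only [Function.comp_apply, hyf_at t k, Complex.norm_real, Real.norm_eq_abs,
        abs_of_nonneg (Real.rpow_nonneg (norm_nonneg _) _)]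
      rw [abs_of_nonneg (Real.rpow_nonneg (εpos k).le _),
        ← Real.rpow_mul (εpos k).le]
    have hgeo : Summable (fun k : ℕ =>
        (2⁻¹:ℝ) ^ ((2:ℝ)⁻¹) * (((2⁻¹:ℝ) ^ ((2:ℝ)⁻¹)) ^ k)) :=
      (summable_geometric_of_lt_one (Real.rpow_nonneg (by norm_num) _)
        (Real.rpow_lt_one (by norm_num) (by norm_num) (by norm_num))).mul_left _
    refine Summable.of_nonneg_of_le (fun k => by rw [hval k]; positivity)
      (fun k => ?_) hgeo
    rw [hval k]
    calc ε k ^ ((t:ℝ) * 2) ≤ ε k ^ ((2:ℝ)⁻¹) := by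
          apply Real.rpow_le_rpow_of_exponent_ge (εpos k) (εone k)
          have := (htmem t).1
          linarith
      _ ≤ ((2⁻¹:ℝ) ^ (k+1)) ^ ((2:ℝ)⁻¹) :=
          Real.rpow_le_rpow (εpos k).le (hεlt k).le (by norm_num)
      _ = (2⁻¹:ℝ) ^ ((2:ℝ)⁻¹) * (((2⁻¹:ℝ) ^ ((2:ℝ)⁻¹)) ^ k) := by
          rw [← Real.rpow_natCast (2⁻¹:ℝ) (k+1), ← Real.rpow_mul (by norm_num),
            mul_comm (((k+1 : ℕ)) : ℝ) ((2:ℝ)⁻¹), Real.rpow_mul (by norm_num),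
            Real.rpow_natCast, pow_succ']
  set y : ι → K := fun t => ⟨yf t, hyf_mem t⟩ with hy
  have hy_at : ∀ (t : ι) (k : ℕ), (y t : ℕ → ℂ) (nn k) = ((ε k ^ (t : ℝ) : ℝ) : ℂ) :=
    fun t k => hyf_at t k
  -- linear independence of the images in the quotient
  have hli : LinearIndependent ℂ (fun t : ι => (diagRange a).mkQ (y t)) := by
    rw [linearIndependent_iff']
    intro s g hsum t₀' ht₀'
    by_contra hg0
    -- pass to the support
    set s' : Finset ι := s.filter (fun t => g t ≠ 0) with hs'
    have hs'ne : s'.Nonempty := ⟨t₀', Finset.mem_filter.mpr ⟨ht₀', hg0⟩⟩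
    set t₀ : ι := s'.min' hs'ne with ht₀def
    have ht₀mem : t₀ ∈ s' := s'.min'_mem hs'ne
    have hgt₀ : g t₀ ≠ 0 := (Finset.mem_filter.mp ht₀mem).2
    -- the sum lies in the range
    have hmemr : (∑ t ∈ s, g t • y t) ∈ diagRange a := by
      have h0 : (diagRange a).mkQ (∑ t ∈ s, g t • y t) = 0 := by
        rw [map_sum]
        simp_rw [map_smul]
        exact hsum
      rwa [← LinearMap.mem_ker, Submodule.ker_mkQ] at h0
    obtain ⟨x, hx⟩ := hmemr
    have coords : ∀ m, ((∑ t ∈ s, g t • y t : K) : ℕ → ℂ) m = ∑ t ∈ s, g t * (y t : ℕ → ℂ) m := by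
      intro m
      rw [lp.coeFn_sum]
      rw [Finset.sum_apply]
      apply Finset.sum_congr rfl
      intro t _
      rw [lp.coeFn_smul]
      rfl
    -- the central estimate
    set R : ℕ → ℝ := fun k => ∑ t ∈ s'.erase t₀, ‖g t‖ * ε k ^ ((t:ℝ) - (t₀:ℝ)) with hR
    have main : ∀ k, ‖g t₀‖ ≤ R k + ε k ^ (1 - (t₀:ℝ)) * ‖x‖ := by
      intro k
      set P : ℝ := ε k ^ ((t₀:ℝ)) with hP
      have hPpos : 0 < P := Real.rpow_pos_of_pos (εpos k) _
      -- the equation at coordinate nn k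
      have hEq : ∑ t ∈ s', g t * ((ε k ^ (t:ℝ) : ℝ) : ℂ) = a (nn k) * x (nn k) := by
        have h1 := hx (nn k)
        rw [coords (nn k)] at h1
        rw [← h1]
        have e1 : ∑ t ∈ s', g t * ((ε k ^ (t:ℝ) : ℝ) : ℂ) =
            ∑ t ∈ s', g t * (y t : ℕ → ℂ) (nn k) :=
          Finset.sum_congr rfl (fun t _ => by rw [hy_at t k])
        rw [e1]
        apply Finset.sum_subset (Finset.filter_subset _ s)
        intro t hts hts'
        have hgt : g t = 0 := by
          by_contra hgt
          exact hts' (Finset.mem_filter.mpr ⟨hts, hgt⟩)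
        rw [hgt, zero_mul]
      -- norms
      have hub : ‖∑ t ∈ s', g t * ((ε k ^ (t:ℝ) : ℝ) : ℂ)‖ ≤ ε k * ‖x‖ := by
        rw [hEq, norm_mul]
        exact mul_le_mul_of_nonneg_left (lp.norm_apply_le_norm (by norm_num) x (nn k))
          (norm_nonneg _)
      have hsplit : ∑ t ∈ s', g t * ((ε k ^ (t:ℝ) : ℝ) : ℂ) =
          g t₀ * ((ε k ^ ((t₀:ℝ)) : ℝ) : ℂ) +
            ∑ t ∈ s'.erase t₀, g t * ((ε k ^ (t:ℝ) : ℝ) : ℂ) :=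
        (Finset.add_sum_erase s' _ ht₀mem).symm
      have hlb : ‖g t₀‖ * P - P * R k ≤ ‖∑ t ∈ s', g t * ((ε k ^ (t:ℝ) : ℝ) : ℂ)‖ := by
        rw [hsplit]
        have h1 : ‖g t₀ * ((ε k ^ ((t₀:ℝ)) : ℝ) : ℂ)‖ = ‖g t₀‖ * P := by
          rw [norm_mul, Complex.norm_real, Real.norm_eq_abs,
            abs_of_nonneg (Real.rpow_nonneg (norm_nonneg _) _)]
        have h2 : ‖∑ t ∈ s'.erase t₀, g t * ((ε k ^ (t:ℝ) : ℝ) : ℂ)‖ ≤ P * R k := by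
          calc ‖∑ t ∈ s'.erase t₀, g t * ((ε k ^ (t:ℝ) : ℝ) : ℂ)‖
              ≤ ∑ t ∈ s'.erase t₀, ‖g t * ((ε k ^ (t:ℝ) : ℝ) : ℂ)‖ := norm_sum_le _ _
            _ = ∑ t ∈ s'.erase t₀, ‖g t‖ * ε k ^ (t:ℝ) := by
                apply Finset.sum_congr rfl
                intro t _
                rw [norm_mul, Complex.norm_real, Real.norm_eq_abs,
                  abs_of_nonneg (Real.rpow_nonneg (norm_nonneg _) _)]
            _ = P * R k := by
                rw [hR, Finset.mul_sum]
                apply Finset.sum_congr rfl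
                intro t _
                rw [hP]
                rw [show ε k ^ ((t₀:ℝ)) * (‖g t‖ * ε k ^ ((t:ℝ) - (t₀:ℝ))) =
                  ‖g t‖ * (ε k ^ ((t₀:ℝ)) * ε k ^ ((t:ℝ) - (t₀:ℝ))) from by ring]
                rw [← Real.rpow_add (εpos k)]
                ring_nf
        have h3 := norm_sub_norm_le (g t₀ * ((ε k ^ ((t₀:ℝ)) : ℝ) : ℂ))
          (-(∑ t ∈ s'.erase t₀, g t * ((ε k ^ (t:ℝ) : ℝ) : ℂ)))
        rw [sub_neg_eq_add, norm_neg, h1] at h3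
        linarith
      -- put together and divide by P
      have hεsplit : ε k = P * ε k ^ (1 - (t₀:ℝ)) := by
        rw [hP, ← Real.rpow_add (εpos k)]
        rw [show (t₀:ℝ) + (1 - (t₀:ℝ)) = 1 from by ring, Real.rpow_one]
      have hchain : ‖g t₀‖ * P - P * R k ≤ P * (ε k ^ (1 - (t₀:ℝ)) * ‖x‖) := by
        calc ‖g t₀‖ * P - P * R k ≤ ε k * ‖x‖ := le_trans hlb hub
          _ = P * (ε k ^ (1 - (t₀:ℝ)) * ‖x‖) := by
              conv_lhs => rw [hεsplit]
              ring
      nlinarith [hPpos]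
    -- limits
    have hRlim : Filter.Tendsto R Filter.atTop (nhds 0) := by
      rw [hR]
      have := tendsto_finset_sum (s'.erase t₀)
        (fun t (_ : t ∈ s'.erase t₀) => ((hrpow ((t:ℝ) - (t₀:ℝ)) (by
          have ht' : t₀ < t := by
            apply lt_of_le_of_ne (s'.min'_le t (Finset.mem_of_mem_erase ‹t ∈ s'.erase t₀›))
            exact (Finset.ne_of_mem_erase ‹t ∈ s'.erase t₀›).symm
          have : (t₀:ℝ) < (t:ℝ) := ht'
          linarith)).const_mul ‖g t‖))
      simpa using this
    have hXlim : Filter.Tendsto (fun k => R k + ε k ^ (1 - (t₀:ℝ)) * ‖x‖)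
        Filter.atTop (nhds 0) := by
      have h2 := (hrpow (1 - (t₀:ℝ)) (by
        have := (htmem t₀).2
        linarith)).mul_const ‖x‖
      have := hRlim.add h2
      simpa using this
    have hle : ‖g t₀‖ ≤ 0 := ge_of_tendsto hXlim (Filter.Eventually.of_forall main)
    exact hgt₀ (norm_le_zero_iff.mp hle)
  -- conclude
  apply le_antisymm (rank_quot_upper a)
  have hcard := hli.cardinal_le_rank
  rwa [show Cardinal.mk ι = Cardinal.continuum from Cardinal.mk_Ioo_real (by norm_num)] at hcard

/-- the graph is isomorphic to K via the first coordinate -/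
def graphEquiv (a : ℕ → ℂ) (ha_bdd : ∃ C : ℝ, ∀ n, ‖a n‖ ≤ C) :
    (diagGraph a) ≃ₗ[ℂ] K := by
  apply LinearEquiv.ofBijective ((LinearMap.fst ℂ K K).comp (diagGraph a).subtype)
  constructor
  · rintro ⟨⟨u, v⟩, hp⟩ ⟨⟨u', v'⟩, hp'⟩ h
    simp only [LinearMap.comp_apply, Submodule.coe_subtype, LinearMap.fst_apply] at h
    have hv : v = v' := by
      apply K_ext; intro n
      rw [mem_diagGraph] at hp hp'
      rw [hp n, hp' n, h]
    simp_all
  · intro u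
    obtain ⟨C, hC⟩ := ha_bdd
    have hC0 : 0 ≤ C := le_trans (norm_nonneg (a 0)) (hC 0)
    have hmem : Memℓp (fun n => a n * u n) 2 := by
      apply memℓp_two_of_le hC0 (g := u)
      intro n
      rw [norm_mul]
      exact mul_le_mul_of_nonneg_right (hC n) (norm_nonneg _)
    refine ⟨⟨(u, ⟨(fun n => a n * u n : ℕ → ℂ), hmem⟩), ?_⟩, rfl⟩
    intro n
    rfl


def tripleMap (c : ℕ → ℂ) (W : Submodule ℂ (K × K)) :
    (firstSummand × ((diagGraph c) × W)) →ₗ[ℂ] (K × K) :=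
  firstSummand.subtype.coprod ((diagGraph c).subtype.coprod W.subtype)

lemma tripleMap_apply (c : ℕ → ℂ) (W : Submodule ℂ (K × K)) (e : firstSummand)
    (g : diagGraph c) (w : W) : tripleMap c W (e, g, w) = ↑e + (↑g + ↑w) := rfl

lemma tripleMap_bij (c : ℕ → ℂ) (hc_ne : ∀ n, c n ≠ 0) (W : Submodule ℂ (K × K))
    (hW : IsCompl (bigS c) W) : Function.Bijective (tripleMap c W) := by
  constructor
  · rw [injective_iff_map_eq_zero]
    rintro ⟨e, g, w⟩ h0
    rw [tripleMap_apply] at h0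
    have h0' : ((e : K × K) + ↑g) + ↑w = 0 := by rw [add_assoc]; exact h0
    have hwS : (w : K × K) ∈ bigS c := by
      have hw : (w : K × K) = -(↑e + ↑g) := eq_neg_of_add_eq_zero_right h0'
      rw [hw]
      exact neg_mem (add_mem (firstSummand_le_bigS c e.2) (diagGraph_le_bigS c g.2))
    have hw0 : (w : K × K) = 0 := Submodule.disjoint_def.mp hW.disjoint _ hwS w.2
    rw [hw0, add_zero] at h0'
    have heg : (e : K × K) ∈ firstSummand ⊓ diagGraph c := by
      rw [Submodule.mem_inf]
      refine ⟨e.2, ?_⟩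
      have : (e : K × K) = -(g : K × K) := eq_neg_of_add_eq_zero_left h0'
      rw [this]; exact neg_mem g.2
    rw [inf_graph c hc_ne, Submodule.mem_bot] at heg
    have hg0 : (g : K × K) = 0 := by
      have : (g : K × K) = -(e : K × K) := eq_neg_of_add_eq_zero_right h0'
      rw [this, heg, neg_zero]
    refine Prod.ext (by exact_mod_cast heg) (Prod.ext (by exact_mod_cast hg0)
      (by exact_mod_cast hw0))
  · rw [← LinearMap.range_eq_top, tripleMap, LinearMap.range_coprod, LinearMap.range_coprod,
      Submodule.range_subtype, Submodule.range_subtype, Submodule.range_subtype, ← sup_assoc,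
      sup_graph c]
    exact codisjoint_iff.mp hW.codisjoint

def tripleEquiv (c : ℕ → ℂ) (hc_ne : ∀ n, c n ≠ 0) (W : Submodule ℂ (K × K))
    (hW : IsCompl (bigS c) W) : (firstSummand × ((diagGraph c) × W)) ≃ₗ[ℂ] (K × K) :=
  LinearEquiv.ofBijective (tripleMap c W) (tripleMap_bij c hc_ne W hW)

lemma tripleEquiv_apply (c : ℕ → ℂ) (hc_ne : ∀ n, c n ≠ 0) (W : Submodule ℂ (K × K))
    (hW : IsCompl (bigS c) W) (e : firstSummand) (g : diagGraph c) (w : W) :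
    tripleEquiv c hc_ne W hW (e, g, w) = ↑e + (↑g + ↑w) := rfl

end Stmt8

open Stmt8 in
theorem algebraically_isomorphic_iff_ranges_both_closed_or_both_nonclosed
    (a b : ℕ → ℂ)
    (ha_bdd : ∃ C : ℝ, ∀ n, ‖a n‖ ≤ C) (hb_bdd : ∃ C : ℝ, ∀ n, ‖b n‖ ≤ C)
    (ha_ne : ∀ n, a n ≠ 0) (hb_ne : ∀ n, b n ≠ 0) :
    -- (i)
    ((IsClosed ((diagRange a) : Set K) ∧ ¬ IsClosed ((diagRange b) : Set K)) →
      ¬ ∃ V : (K × K) ≃ₗ[ℂ] (K × K),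
          V '' (firstSummand : Set (K × K)) = (firstSummand : Set (K × K)) ∧
          V '' ((diagGraph a) : Set (K × K)) = ((diagGraph b) : Set (K × K))) ∧
    -- (ii)
    ((IsClosed ((diagRange a) : Set K) ↔ IsClosed ((diagRange b) : Set K)) →
      ∃ V : (K × K) ≃ₗ[ℂ] (K × K),
        V '' (firstSummand : Set (K × K)) = (firstSummand : Set (K × K)) ∧
        V '' ((diagGraph a) : Set (K × K)) = ((diagGraph b) : Set (K × K))) := by
  constructor
  · rintro ⟨hA, hB⟩ ⟨V, hV1, hV2⟩
    have hAt : diagRange a = ⊤ := diagRange_eq_top_of_isClosed a ha_ne hA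
    have hsup : firstSummand ⊔ diagGraph a = ⊤ := by
      rw [sup_graph a, bigS, hAt]
      exact (Submodule.prod_eq_top_iff _ _ _).mpr ⟨rfl, rfl⟩
    have hmap1 : Submodule.map (V : (K × K) →ₗ[ℂ] (K × K)) firstSummand = firstSummand :=
      SetLike.ext' (by rw [Submodule.map_coe]; exact hV1)
    have hmap2 : Submodule.map (V : (K × K) →ₗ[ℂ] (K × K)) (diagGraph a) = diagGraph b :=
      SetLike.ext' (by rw [Submodule.map_coe]; exact hV2)
    have htop : Submodule.map (V : (K × K) →ₗ[ℂ] (K × K)) ⊤ = ⊤ := by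
      rw [Submodule.map_top, LinearMap.range_eq_top]
      exact V.surjective
    have hsupb : firstSummand ⊔ diagGraph b = ⊤ := by
      rw [← hmap1, ← hmap2, ← Submodule.map_sup, hsup, htop]
    have hBt : diagRange b = ⊤ := by
      rw [sup_graph b] at hsupb
      exact ((Submodule.prod_eq_top_iff _ _ _).mp hsupb).2
    exact hB (by rw [hBt, Submodule.top_coe]; exact isClosed_univ)
  · intro hiff
    have quotEquiv : ∀ c : ℕ → ℂ, ((K × K) ⧸ bigS c) ≃ₗ[ℂ] (K ⧸ diagRange c) := by
      intro c
      have hsurj : Function.Surjective ((diagRange c).mkQ.comp (LinearMap.snd ℂ K K)) :=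
        (Submodule.mkQ_surjective _).comp Prod.snd_surjective
      have hker : LinearMap.ker ((diagRange c).mkQ.comp (LinearMap.snd ℂ K K)) = bigS c := by
        ext ⟨u, v⟩
        simp [LinearMap.mem_ker, Submodule.Quotient.mk_eq_zero, bigS, Submodule.mem_prod]
      exact (Submodule.quotEquivOfEq _ _ hker.symm).trans
        (LinearMap.quotKerEquivOfSurjective _ hsurj)
    have hrank : Module.rank ℂ ((K × K) ⧸ bigS a) = Module.rank ℂ ((K × K) ⧸ bigS b) := by
      rw [(quotEquiv a).rank_eq, (quotEquiv b).rank_eq]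
      by_cases hcl : IsClosed ((diagRange a) : Set K)
      · have hb : IsClosed ((diagRange b) : Set K) := hiff.mp hcl
        rw [diagRange_eq_top_of_isClosed a ha_ne hcl, diagRange_eq_top_of_isClosed b hb_ne hb]
      · have hb : ¬ IsClosed ((diagRange b) : Set K) := fun h => hcl (hiff.mpr h)
        rw [rank_quot_continuum a ha_ne hcl, rank_quot_continuum b hb_ne hb]
    obtain ⟨Wa, hWa⟩ := Submodule.exists_isCompl (bigS a)
    obtain ⟨Wb, hWb⟩ := Submodule.exists_isCompl (bigS b)
    have hrw : Module.rank ℂ Wa = Module.rank ℂ Wb := by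
      rw [← (Submodule.quotientEquivOfIsCompl _ _ hWa).rank_eq,
          ← (Submodule.quotientEquivOfIsCompl _ _ hWb).rank_eq]
      exact hrank
    haveI : Module.Free ℂ ↥Wa := Module.Free.of_divisionRing ℂ ↥Wa
    haveI : Module.Free ℂ ↥Wb := Module.Free.of_divisionRing ℂ ↥Wb
    obtain ⟨ψ⟩ := nonempty_linearEquiv_of_rank_eq hrw
    set φ : (diagGraph a) ≃ₗ[ℂ] (diagGraph b) :=
      (graphEquiv a ha_bdd).trans (graphEquiv b hb_bdd).symm with hφ
    set Fa := tripleEquiv a ha_ne Wa hWa with hFa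
    set Fb := tripleEquiv b hb_ne Wb hWb with hFb
    set mid : (firstSummand × ((diagGraph a) × Wa)) ≃ₗ[ℂ] (firstSummand × ((diagGraph b) × Wb)) :=
      (LinearEquiv.refl ℂ firstSummand).prodCongr (φ.prodCongr ψ) with hmid
    set V := (Fa.symm.trans mid).trans Fb with hV
    have hVE : ∀ x ∈ firstSummand, V x = x := by
      intro x hx
      have h1 : Fa.symm x = (⟨x, hx⟩, (0, 0)) := by
        rw [LinearEquiv.symm_apply_eq]
        rw [hFa, tripleEquiv_apply]
        simp
      rw [hV]
      simp only [LinearEquiv.trans_apply, h1, hmid, LinearEquiv.prodCongr_apply,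
        LinearEquiv.refl_apply, map_zero, hFb]
      rw [tripleEquiv_apply]
      simp
    have hVG : ∀ g : diagGraph a, V ↑g = ↑(φ g) := by
      intro g
      have h1 : Fa.symm ↑g = (0, (g, 0)) := by
        rw [LinearEquiv.symm_apply_eq]
        rw [hFa, tripleEquiv_apply]
        simp
      rw [hV]
      simp only [LinearEquiv.trans_apply, h1, hmid, LinearEquiv.prodCongr_apply,
        LinearEquiv.refl_apply, map_zero, hFb]
      rw [tripleEquiv_apply]
      simp
    refine ⟨V, ?_, ?_⟩
    · ext x
      constructor
      · rintro ⟨y, hy, rfl⟩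
        rw [hVE y hy]; exact hy
      · intro hx
        exact ⟨x, hx, hVE x hx⟩
    · ext x
      constructor
      · rintro ⟨y, hy, rfl⟩
        rw [hVG ⟨y, hy⟩]
        exact (φ ⟨y, hy⟩).2
      · intro hx
        refine ⟨↑(φ.symm ⟨x, hx⟩), (φ.symm ⟨x, hx⟩).2, ?_⟩
        rw [hVG (φ.symm ⟨x, hx⟩), LinearEquiv.apply_symm_apply]

end
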